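/- In the Black-Scholes setting, for fixed S, K, T > 0 and r, q ∈ ℝ, and for every market price c with max(S·exp(−q·T) − K·exp(−r·T), 0) < c < S·exp(−q·T), there exists a unique implied volatility σ > 0 such that C(S,K,T,r,q,σ) = c. -/

import Mathlib

open Real MeasureTheory Filter Set

/-- Standard normal density. -/
noncomputable def stdNormalPdf (x : ℝ) : ℝ := Real.exp (-x ^ 2 / 2) / Real.sqrt (2 * Real.pi)

/-- Standard normal cumulative distribution function. -/
noncomputable def stdNormalCdf (x : ℝ) : ℝ := ∫ t in Set.Iic x, stdNormalPdf t

/-- Black-Scholes `d₁`. -/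
noncomputable def bsD1 (S K T r q σ : ℝ) : ℝ :=
  (Real.log (S / K) + (r - q + σ ^ 2 / 2) * T) / (σ * Real.sqrt T)

/-- Black-Scholes `d₂`. -/
noncomputable def bsD2 (S K T r q σ : ℝ) : ℝ := bsD1 S K T r q σ - σ * Real.sqrt T

/-- Black-Scholes call option price. -/
noncomputable def bsCall (S K T r q σ : ℝ) : ℝ :=
  S * Real.exp (-q * T) * stdNormalCdf (bsD1 S K T r q σ) -
    K * Real.exp (-r * T) * stdNormalCdf (bsD2 S K T r q σ)

lemma stdNormalPdf_pos (x : ℝ) : 0 < stdNormalPdf x :=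
  div_pos (exp_pos _) (Real.sqrt_pos.2 (by positivity))

lemma continuous_stdNormalPdf : Continuous stdNormalPdf := by
  unfold stdNormalPdf
  fun_prop

lemma integrable_stdNormalPdf : Integrable stdNormalPdf := by
  have h := integrable_exp_neg_mul_sq (b := (1:ℝ)/2) (by norm_num)
  have : stdNormalPdf = fun x => Real.exp (-(1/2) * x ^ 2) * (1 / Real.sqrt (2 * Real.pi)) := by
    funext x; unfold stdNormalPdf; ring_nf
  rw [this]
  exact h.mul_const _

lemma integral_stdNormalPdf : ∫ x, stdNormalPdf x = 1 := by
  have h := integral_gaussian ((1:ℝ)/2)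
  have e : ∀ x : ℝ, stdNormalPdf x = Real.exp (-(1/2) * x ^ 2) * (1 / Real.sqrt (2 * Real.pi)) := by
    intro x; unfold stdNormalPdf; ring_nf
  rw [show (fun x => stdNormalPdf x) = fun x => Real.exp (-(1/2) * x ^ 2) * (1 / Real.sqrt (2 * Real.pi)) from funext e]
  rw [MeasureTheory.integral_mul_const, h]
  rw [show Real.pi / (1/2 : ℝ) = 2 * Real.pi by ring, mul_one_div,
    div_self (by positivity : Real.sqrt (2 * Real.pi) ≠ 0)]

lemma stdNormalCdf_tendsto_atTop : Tendsto stdNormalCdf atTop (nhds 1) := by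
  have h : Tendsto (fun x : ℝ => ∫ t in Set.Iic x, stdNormalPdf t) atTop (nhds (∫ t, stdNormalPdf t)) := by
    exact (MeasureTheory.AECover.integral_tendsto_of_countably_generated
      (aecover_Iic tendsto_id) integrable_stdNormalPdf)
  rw [integral_stdNormalPdf] at h
  exact h

lemma stdNormalCdf_tendsto_atBot : Tendsto stdNormalCdf atBot (nhds 0) := by
  have h : Tendsto (fun x : ℝ => ∫ t in Set.Ioi x, stdNormalPdf t) atBot (nhds (∫ t, stdNormalPdf t)) :=
    MeasureTheory.AECover.integral_tendsto_of_countably_generated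
      (aecover_Ioi tendsto_id) integrable_stdNormalPdf
  have e : ∀ x : ℝ, stdNormalCdf x = (∫ t, stdNormalPdf t) - ∫ t in Set.Ioi x, stdNormalPdf t := by
    intro x
    have := MeasureTheory.integral_add_compl (measurableSet_Iic (a := x)) integrable_stdNormalPdf
    rw [Set.compl_Iic] at this
    unfold stdNormalCdf
    linarith
  rw [show stdNormalCdf = fun x => (∫ t, stdNormalPdf t) - ∫ t in Set.Ioi x, stdNormalPdf t from funext e]
  have := (tendsto_const_nhds (x := ∫ t, stdNormalPdf t) (f := atBot (α := ℝ))).sub h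
  simpa [integral_stdNormalPdf] using this

lemma hasDerivAt_stdNormalCdf (x : ℝ) : HasDerivAt stdNormalCdf (stdNormalPdf x) x := by
  have key : ∀ y : ℝ, stdNormalCdf y = stdNormalCdf 0 + ∫ t in (0:ℝ)..y, stdNormalPdf t := by
    intro y
    have := intervalIntegral.integral_Iic_sub_Iic (integrable_stdNormalPdf.integrableOn (s := Set.Iic 0))
      (integrable_stdNormalPdf.integrableOn (s := Set.Iic y))
    unfold stdNormalCdf
    linarith
  rw [show stdNormalCdf = fun y => stdNormalCdf 0 + ∫ t in (0:ℝ)..y, stdNormalPdf t from funext key]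
  have h : HasDerivAt (fun y : ℝ => ∫ t in (0:ℝ)..y, stdNormalPdf t) (stdNormalPdf x) x :=
    intervalIntegral.integral_hasDerivAt_right
      (continuous_stdNormalPdf.intervalIntegrable _ _)
      (continuous_stdNormalPdf.stronglyMeasurableAtFilter _ _)
      continuous_stdNormalPdf.continuousAt
  simpa using (h.const_add (stdNormalCdf 0))

noncomputable def bsA (S K T r q : ℝ) : ℝ := Real.log (S / K) + (r - q) * T

lemma bsD1_eq {S K T r q : ℝ} (hT : 0 < T) (σ : ℝ) (hσ : σ ≠ 0) :
    bsD1 S K T r q σ = bsA S K T r q / (σ * Real.sqrt T) + σ * Real.sqrt T / 2 := by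
  have hsT : (0:ℝ) < Real.sqrt T := Real.sqrt_pos.2 hT
  have h2 : Real.sqrt T * Real.sqrt T = T := Real.mul_self_sqrt hT.le
  unfold bsD1 bsA
  field_simp
  linear_combination (-σ ^ 2) * (Real.sq_sqrt hT.le)

lemma bsD2_eq {S K T r q : ℝ} (hT : 0 < T) (σ : ℝ) (hσ : σ ≠ 0) :
    bsD2 S K T r q σ = bsA S K T r q / (σ * Real.sqrt T) - σ * Real.sqrt T / 2 := by
  rw [bsD2, bsD1_eq hT σ hσ]; ring

lemma bs_spot_eq {S K T r q : ℝ} (hS : 0 < S) (hK : 0 < K) :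
    S * Real.exp (-q * T) = K * Real.exp (-r * T) * Real.exp (bsA S K T r q) := by
  have he : Real.exp (-r * T) * Real.exp ((r - q) * T) = Real.exp (-q * T) := by
    rw [← Real.exp_add]; congr 1; ring
  rw [bsA, Real.exp_add, Real.exp_log (div_pos hS hK)]
  rw [show K * Real.exp (-r*T) * (S/K * Real.exp ((r-q)*T))
      = S * (Real.exp (-r*T) * Real.exp ((r-q)*T)) from by field_simp, he]

lemma bs_pdf_identity {S K T r q : ℝ} (hS : 0 < S) (hK : 0 < K) (hT : 0 < T)
    (σ : ℝ) (hσ : 0 < σ) :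
    K * Real.exp (-r * T) * stdNormalPdf (bsD2 S K T r q σ)
      = S * Real.exp (-q * T) * stdNormalPdf (bsD1 S K T r q σ) := by
  have hsT : (0:ℝ) < Real.sqrt T := Real.sqrt_pos.2 hT
  have hs : σ * Real.sqrt T ≠ 0 := by positivity
  have hdd : bsD1 S K T r q σ ^ 2 = bsD2 S K T r q σ ^ 2 + 2 * bsA S K T r q := by
    rw [bsD1_eq hT σ hσ.ne', bsD2_eq hT σ hσ.ne']
    field_simp
    ring
  unfold stdNormalPdf
  rw [show -bsD2 S K T r q σ ^ 2 / 2 = -bsD1 S K T r q σ ^ 2 / 2 + bsA S K T r q from by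
    linarith, Real.exp_add, bs_spot_eq hS hK]
  ring

lemma hasDerivAt_bsD1 {S K T r q : ℝ} (hT : 0 < T) (σ : ℝ) (hσ : 0 < σ) :
    HasDerivAt (fun x => bsD1 S K T r q x)
      (Real.sqrt T / 2 - bsA S K T r q / (σ ^ 2 * Real.sqrt T)) σ := by
  have hsT : (0:ℝ) < Real.sqrt T := Real.sqrt_pos.2 hT
  have hs : σ * Real.sqrt T ≠ 0 := by positivity
  have hden : HasDerivAt (fun x : ℝ => x * Real.sqrt T) (Real.sqrt T) σ := by
    simpa using (hasDerivAt_id σ).mul_const (Real.sqrt T)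
  have hdiv : HasDerivAt (fun x : ℝ => bsA S K T r q / (x * Real.sqrt T))
      ((0 * (σ * Real.sqrt T) - bsA S K T r q * Real.sqrt T) / (σ * Real.sqrt T) ^ 2) σ :=
    (hasDerivAt_const σ (bsA S K T r q)).div hden hs
  have hlin : HasDerivAt (fun x : ℝ => x * Real.sqrt T / 2) (Real.sqrt T / 2) σ := by
    simpa using ((hasDerivAt_id σ).mul_const (Real.sqrt T)).div_const 2
  have hsum := hdiv.add hlin
  have heq : (fun x => bsD1 S K T r q x)
      =ᶠ[nhds σ] (fun x => bsA S K T r q / (x * Real.sqrt T) + x * Real.sqrt T / 2) := by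
    filter_upwards [IsOpen.mem_nhds isOpen_Ioi hσ] with x hx
    exact bsD1_eq hT x (ne_of_gt hx)
  refine HasDerivAt.congr_of_eventuallyEq ?_ heq
  convert hsum using 1
  · rfl
  have h2 : Real.sqrt T ^ 2 = T := Real.sq_sqrt hT.le
  field_simp
  ring

lemma hasDerivAt_bsCall {S K T r q : ℝ} (hS : 0 < S) (hK : 0 < K) (hT : 0 < T)
    (σ : ℝ) (hσ : 0 < σ) :
    HasDerivAt (fun x => bsCall S K T r q x)
      (S * Real.exp (-q * T) * stdNormalPdf (bsD1 S K T r q σ) * Real.sqrt T) σ := by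
  have hd1 := hasDerivAt_bsD1 (S := S) (K := K) (r := r) (q := q) hT σ hσ
  have hd2 : HasDerivAt (fun x => bsD2 S K T r q x)
      (Real.sqrt T / 2 - bsA S K T r q / (σ ^ 2 * Real.sqrt T) - Real.sqrt T) σ := by
    have := hd1.sub ((hasDerivAt_id σ).mul_const (Real.sqrt T))
    simp only [one_mul] at this; exact this
  have hc1 : HasDerivAt (fun x => stdNormalCdf (bsD1 S K T r q x))
      (stdNormalPdf (bsD1 S K T r q σ) * (Real.sqrt T / 2 - bsA S K T r q / (σ ^ 2 * Real.sqrt T))) σ :=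
    (hasDerivAt_stdNormalCdf _).comp σ hd1
  have hc2 : HasDerivAt (fun x => stdNormalCdf (bsD2 S K T r q x))
      (stdNormalPdf (bsD2 S K T r q σ) * (Real.sqrt T / 2 - bsA S K T r q / (σ ^ 2 * Real.sqrt T) - Real.sqrt T)) σ :=
    (hasDerivAt_stdNormalCdf _).comp σ hd2
  have htot := (hc1.const_mul (S * Real.exp (-q * T))).sub (hc2.const_mul (K * Real.exp (-r * T)))
  have hident := bs_pdf_identity (S:=S) (K:=K) (T:=T) (r:=r) (q:=q) hS hK hT σ hσ
  refine htot.congr_deriv ?_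
  symm
  linear_combination (Real.sqrt T / 2 - bsA S K T r q / (σ ^ 2 * Real.sqrt T) - Real.sqrt T) * hident

open Filter in
lemma tendsto_bsD1_atTop {S K T r q : ℝ} (hT : 0 < T) :
    Tendsto (fun σ => bsD1 S K T r q σ) atTop atTop := by
  have hsT : (0:ℝ) < Real.sqrt T := Real.sqrt_pos.2 hT
  have h1 : Tendsto (fun σ : ℝ => bsA S K T r q / (σ * Real.sqrt T)) atTop (nhds 0) :=
    Tendsto.div_atTop (tendsto_const_nhds) (tendsto_id.atTop_mul_const hsT)
  have h2 : Tendsto (fun σ : ℝ => σ * Real.sqrt T / 2) atTop atTop :=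
    (tendsto_id.atTop_mul_const hsT).atTop_div_const two_pos
  refine Tendsto.congr' ?_ (h1.add_atTop h2)
  filter_upwards [eventually_gt_atTop (0:ℝ)] with σ hσ
  exact (bsD1_eq hT σ hσ.ne').symm

open Filter in
lemma tendsto_bsD2_atBot {S K T r q : ℝ} (hT : 0 < T) :
    Tendsto (fun σ => bsD2 S K T r q σ) atTop atBot := by
  have hsT : (0:ℝ) < Real.sqrt T := Real.sqrt_pos.2 hT
  have h1 : Tendsto (fun σ : ℝ => bsA S K T r q / (σ * Real.sqrt T)) atTop (nhds 0) :=
    Tendsto.div_atTop (tendsto_const_nhds) (tendsto_id.atTop_mul_const hsT)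
  have h2 : Tendsto (fun σ : ℝ => -(σ * Real.sqrt T / 2)) atTop atBot :=
    tendsto_neg_atTop_atBot.comp ((tendsto_id.atTop_mul_const hsT).atTop_div_const two_pos)
  refine Tendsto.congr' ?_ (h1.add_atBot h2)
  filter_upwards [eventually_gt_atTop (0:ℝ)] with σ hσ
  rw [bsD2_eq hT σ hσ.ne', sub_eq_add_neg]

open Filter in
lemma tendsto_bsCall_atTop {S K T r q : ℝ} (hT : 0 < T) :
    Tendsto (fun σ => bsCall S K T r q σ) atTop (nhds (S * Real.exp (-q * T))) := by
  have h1 := stdNormalCdf_tendsto_atTop.comp (tendsto_bsD1_atTop (S := S) (K := K) (r := r) (q := q) hT)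
  have h2 := stdNormalCdf_tendsto_atBot.comp (tendsto_bsD2_atBot (S := S) (K := K) (r := r) (q := q) hT)
  have := (h1.const_mul (S * Real.exp (-q * T))).sub (h2.const_mul (K * Real.exp (-r * T)))
  simpa [bsCall, Function.comp, mul_comm] using this

open Filter in
lemma tendsto_bsCall_zero {S K T r q : ℝ} (hS : 0 < S) (hK : 0 < K) (hT : 0 < T) :
    Tendsto (fun σ => bsCall S K T r q σ) (nhdsWithin 0 (Set.Ioi 0))
      (nhds (max (S * Real.exp (-q * T) - K * Real.exp (-r * T)) 0)) := by
  have hsT : (0:ℝ) < Real.sqrt T := Real.sqrt_pos.2 hT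
  set A := bsA S K T r q with hA
  have hspot := bs_spot_eq (T := T) (r := r) (q := q) hS hK
  have hlin : Tendsto (fun σ : ℝ => σ * Real.sqrt T / 2) (nhdsWithin 0 (Set.Ioi 0)) (nhds 0) := by
    have : Tendsto (fun σ : ℝ => σ * Real.sqrt T / 2) (nhds 0) (nhds (0 * Real.sqrt T / 2)) :=
      ((continuous_id.mul continuous_const).div_const 2).tendsto 0
    simpa using this.mono_left nhdsWithin_le_nhds
  have hinv : Tendsto (fun σ : ℝ => σ⁻¹) (nhdsWithin 0 (Set.Ioi 0)) atTop := tendsto_inv_nhdsGT_zero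
  have hKe : (0:ℝ) < K * Real.exp (-r * T) := by positivity
  rcases lt_trichotomy A 0 with hA0 | hA0 | hA0
  · -- A < 0 : both d1, d2 → -∞, call → 0 and max = 0
    have hfrac : Tendsto (fun σ : ℝ => A / (σ * Real.sqrt T)) (nhdsWithin 0 (Set.Ioi 0)) atBot := by
      have : Tendsto (fun σ : ℝ => (A / Real.sqrt T) * σ⁻¹) (nhdsWithin 0 (Set.Ioi 0)) atBot :=
        Tendsto.const_mul_atTop_of_neg (div_neg_of_neg_of_pos hA0 hsT) hinv
      refine this.congr fun σ => by rw [div_mul_eq_div_div_swap, div_div]; ring_nf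
    have hd1 : Tendsto (fun σ => bsD1 S K T r q σ) (nhdsWithin 0 (Set.Ioi 0)) atBot := by
      refine Tendsto.congr' ?_ (hfrac.atBot_add hlin)
      filter_upwards [self_mem_nhdsWithin] with σ hσ
      exact (bsD1_eq hT σ (ne_of_gt hσ)).symm
    have hd2 : Tendsto (fun σ => bsD2 S K T r q σ) (nhdsWithin 0 (Set.Ioi 0)) atBot := by
      have hlin' : Tendsto (fun σ : ℝ => -(σ * Real.sqrt T / 2)) (nhdsWithin 0 (Set.Ioi 0)) (nhds 0) := by
        have := hlin.neg; rwa [neg_zero] at this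
      refine Tendsto.congr' ?_ (hfrac.atBot_add hlin')
      filter_upwards [self_mem_nhdsWithin] with σ hσ
      rw [bsD2_eq hT σ (ne_of_gt hσ), sub_eq_add_neg]
    have h1 := stdNormalCdf_tendsto_atBot.comp hd1
    have h2 := stdNormalCdf_tendsto_atBot.comp hd2
    have hmax : max (S * Real.exp (-q * T) - K * Real.exp (-r * T)) 0 = 0 := by
      rw [max_eq_right]
      rw [hspot]
      nlinarith [Real.exp_lt_one_iff.2 hA0, hKe]
    rw [hmax]
    have := (h1.const_mul (S * Real.exp (-q * T))).sub (h2.const_mul (K * Real.exp (-r * T)))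
    simpa [bsCall, Function.comp, mul_comm] using this
  · -- A = 0 : d1, d2 → 0, and S e^{-qT} = K e^{-rT}
    have hse : S * Real.exp (-q * T) = K * Real.exp (-r * T) := by
      rw [hspot, ← hA, hA0, Real.exp_zero, mul_one]
    have hd1 : Tendsto (fun σ => bsD1 S K T r q σ) (nhdsWithin 0 (Set.Ioi 0)) (nhds 0) := by
      refine Tendsto.congr' ?_ hlin
      filter_upwards [self_mem_nhdsWithin] with σ hσ
      rw [bsD1_eq hT σ (ne_of_gt hσ), ← hA, hA0, zero_div, zero_add]
    have hd2 : Tendsto (fun σ => bsD2 S K T r q σ) (nhdsWithin 0 (Set.Ioi 0)) (nhds 0) := by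
      have := hlin.neg
      rw [neg_zero] at this
      refine Tendsto.congr' ?_ this
      filter_upwards [self_mem_nhdsWithin] with σ hσ
      rw [bsD2_eq hT σ (ne_of_gt hσ), ← hA, hA0, zero_div, zero_sub]
    have hcont : ContinuousAt stdNormalCdf 0 := (hasDerivAt_stdNormalCdf 0).continuousAt
    have h1 := (hcont.tendsto).comp hd1
    have h2 := (hcont.tendsto).comp hd2
    have hmax : max (S * Real.exp (-q * T) - K * Real.exp (-r * T)) 0 = 0 := by
      rw [hse, sub_self, max_self]
    rw [hmax]
    have hz : S * Real.exp (-q * T) * stdNormalCdf 0 - K * Real.exp (-r * T) * stdNormalCdf 0 = 0 := by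
      rw [hse]; ring
    have htend := (h1.const_mul (S * Real.exp (-q * T))).sub (h2.const_mul (K * Real.exp (-r * T)))
    rw [hz] at htend
    simpa [bsCall, Function.comp] using htend
  · -- A > 0 : both d1, d2 → +∞, call → S e^{-qT} - K e^{-rT} = max
    have hfrac : Tendsto (fun σ : ℝ => A / (σ * Real.sqrt T)) (nhdsWithin 0 (Set.Ioi 0)) atTop := by
      have : Tendsto (fun σ : ℝ => (A / Real.sqrt T) * σ⁻¹) (nhdsWithin 0 (Set.Ioi 0)) atTop :=
        Tendsto.const_mul_atTop (div_pos hA0 hsT) hinv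
      refine this.congr fun σ => by rw [div_mul_eq_div_div_swap, div_div]; ring_nf
    have hd1 : Tendsto (fun σ => bsD1 S K T r q σ) (nhdsWithin 0 (Set.Ioi 0)) atTop := by
      refine Tendsto.congr' ?_ (hfrac.atTop_add hlin)
      filter_upwards [self_mem_nhdsWithin] with σ hσ
      exact (bsD1_eq hT σ (ne_of_gt hσ)).symm
    have hd2 : Tendsto (fun σ => bsD2 S K T r q σ) (nhdsWithin 0 (Set.Ioi 0)) atTop := by
      have hlin' : Tendsto (fun σ : ℝ => -(σ * Real.sqrt T / 2)) (nhdsWithin 0 (Set.Ioi 0)) (nhds 0) := by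
        have := hlin.neg; rwa [neg_zero] at this
      refine Tendsto.congr' ?_ (hfrac.atTop_add hlin')
      filter_upwards [self_mem_nhdsWithin] with σ hσ
      rw [bsD2_eq hT σ (ne_of_gt hσ), sub_eq_add_neg]
    have h1 := stdNormalCdf_tendsto_atTop.comp hd1
    have h2 := stdNormalCdf_tendsto_atTop.comp hd2
    have hmax : max (S * Real.exp (-q * T) - K * Real.exp (-r * T)) 0
        = S * Real.exp (-q * T) - K * Real.exp (-r * T) := by
      rw [max_eq_left]
      rw [hspot]
      have h1A : (1:ℝ) < Real.exp A := by
        rw [show (1:ℝ) = Real.exp 0 from (Real.exp_zero).symm]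
        exact Real.exp_lt_exp.2 hA0
      nlinarith [hKe]
    rw [hmax]
    have := (h1.const_mul (S * Real.exp (-q * T))).sub (h2.const_mul (K * Real.exp (-r * T)))
    simpa [bsCall, Function.comp, mul_comm] using this


/-- Existence and uniqueness of the Black-Scholes implied volatility: for any
price `c` strictly between the intrinsic value and the discounted spot there
is a unique `σ > 0` with `C(S,K,T,r,q,σ) = c`. -/
theorem bs_implied_vol_exists_unique (S K T r q : ℝ) (hS : 0 < S) (hK : 0 < K)
    (hT : 0 < T) (c : ℝ)
    (hc₁ : max (S * Real.exp (-q * T) - K * Real.exp (-r * T)) 0 < c)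
    (hc₂ : c < S * Real.exp (-q * T)) :
    ∃! σ : ℝ, 0 < σ ∧ bsCall S K T r q σ = c := by
  set f : ℝ → ℝ := fun σ => bsCall S K T r q σ with hf
  have hpos : ∀ x ∈ Set.Ioi (0:ℝ), 0 < S * Real.exp (-q * T) * stdNormalPdf (bsD1 S K T r q x) * Real.sqrt T := by
    intro x _
    have := stdNormalPdf_pos (bsD1 S K T r q x)
    have hsT : (0:ℝ) < Real.sqrt T := Real.sqrt_pos.2 hT
    positivity
  have hmono : StrictMonoOn f (Set.Ioi 0) := by
    refine strictMonoOn_of_deriv_pos (convex_Ioi 0) ?_ ?_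
    · intro x hx
      exact (hasDerivAt_bsCall hS hK hT x hx).continuousAt.continuousWithinAt
    · intro x hx
      rw [interior_Ioi] at hx
      rw [(hasDerivAt_bsCall hS hK hT x hx).deriv]
      exact hpos x hx
  -- find σ₁ with f σ₁ < c
  have hlow := tendsto_bsCall_zero (S := S) (K := K) (T := T) (r := r) (q := q) hS hK hT
  have hev1 : ∀ᶠ σ in nhdsWithin 0 (Set.Ioi 0), f σ < c := hlow.eventually_lt_const hc₁
  obtain ⟨σ₁, hσ₁c, hσ₁pos⟩ := (hev1.and self_mem_nhdsWithin).exists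
  -- find σ₂ > σ₁ with c < f σ₂
  have hhigh := tendsto_bsCall_atTop (S := S) (K := K) (r := r) (q := q) hT
  have hev2 : ∀ᶠ σ in Filter.atTop, c < f σ := hhigh.eventually_const_lt hc₂
  obtain ⟨σ₂, hσ₂c, hσ₂gt⟩ := (hev2.and (Filter.eventually_gt_atTop σ₁)).exists
  have hsub : Set.Icc σ₁ σ₂ ⊆ Set.Ioi 0 := fun x hx => lt_of_lt_of_le hσ₁pos hx.1
  have hcont : ContinuousOn f (Set.Icc σ₁ σ₂) := fun x hx =>
    (hasDerivAt_bsCall hS hK hT x (hsub hx)).continuousAt.continuousWithinAt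
  have hc_mem : c ∈ Set.Icc (f σ₁) (f σ₂) := ⟨hσ₁c.le, hσ₂c.le⟩
  obtain ⟨σ₀, hσ₀mem, hσ₀⟩ := intermediate_value_Icc hσ₂gt.le hcont hc_mem
  refine ⟨σ₀, ⟨lt_of_lt_of_le hσ₁pos hσ₀mem.1, hσ₀⟩, ?_⟩
  rintro y ⟨hy, hyc⟩
  exact hmono.injOn hy (hsub hσ₀mem) (by show bsCall S K T r q y = f σ₀; rw [hyc, hσ₀])
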